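/- Let E ∈ C³(ℝ²) with ∇E(0) = (cos α, sin α), E_ijk = ∇³E(0)[e_i, e_j, e_k], and A = [[(E111 − E122)/2, (E112 − E222)/2], [E112, E122]]. Then: (i) the leading-order GAD system ẋ = −(I − 2 v ⊗ v) ∇E(0), ε² v̇ = −(I − v ⊗ v) ∇³E(0)[x, v], for v = (cos φ, sin φ) on the unit circle, is equivalent (under v ↦ v̄ = (cos 2φ, sin 2φ)) to ẋ = R_{−α} v̄, ε² d/dt v̄ = −2 ⟨R_{π/2} v̄, A x⟩ R_{π/2} v̄; and (ii) for A x ≠ 0, the leading-order ISD ẋ = −(I − 2 w1(x) ⊗ w1(x)) ∇E(0), where w1(x) is a unit eigenvector for the smallest eigenvalue of ∇³E(0)[x], equals ẋ = −R_{−α} A x / ‖A x‖. -/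

import Mathlib

open Real Filter Set
open scoped Topology RealInnerProductSpace

noncomputable section
abbrev Vec (N : ℕ) := EuclideanSpace ℝ (Fin N)

noncomputable def hessCLM {N : ℕ} (E : Vec N → ℝ) (x : Vec N) : Vec N →L[ℝ] Vec N :=
  fderiv ℝ (gradient E) x

noncomputable def hessOp {N : ℕ} (E : Vec N → ℝ) (x : Vec N) : Module.End ℝ (Vec N) :=
  (hessCLM E x).toLinearMap

def IsMinEigen {N : ℕ} (T : Module.End ℝ (Vec N)) (lam : ℝ) : Prop :=
  T.HasEigenvalue lam ∧ ∀ μ : ℝ, T.HasEigenvalue μ → lam ≤ μ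

def IsMinEigvec {N : ℕ} (T : Module.End ℝ (Vec N)) (w : Vec N) : Prop :=
  ‖w‖ = 1 ∧ ∃ lam : ℝ, IsMinEigen T lam ∧ T w = lam • w

def TwoSmallestEigen {N : ℕ} (T : Module.End ℝ (Vec N)) (lam1 lam2 : ℝ) : Prop :=
  T.HasEigenvalue lam1 ∧ T.HasEigenvalue lam2 ∧ lam1 ≤ lam2 ∧
    (∀ μ : ℝ, T.HasEigenvalue μ → lam1 ≤ μ) ∧
    (∀ μ : ℝ, T.HasEigenvalue μ → μ = lam1 ∨ lam2 ≤ μ) ∧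
    (lam1 < lam2 → Module.finrank ℝ (T.eigenspace lam1) = 1)

/-- the reflection `(I - 2 w ⊗ w) u`. -/
def reflect {N : ℕ} (w u : Vec N) : Vec N := u - (2 * ⟪w, u⟫) • w

/-- ISD vector field with eigendirection `w`. -/
noncomputable def isdField {N : ℕ} (E : Vec N → ℝ) (x w : Vec N) : Vec N :=
  -(reflect w (gradient E x))

def IsISDSolOn {N : ℕ} (E : Vec N → ℝ) (x : ℝ → Vec N) (s : Set ℝ) : Prop :=
  ∀ t ∈ s, ∃ w : Vec N, IsMinEigvec (hessOp E (x t)) w ∧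
    HasDerivAt x (isdField E (x t) w) t

noncomputable def gadVField {N : ℕ} (E : Vec N → ℝ) (x v : Vec N) : Vec N :=
  -(hessCLM E x v) + ⟪v, hessCLM E x v⟫ • v

def IsGADSolOn {N : ℕ} (E : Vec N → ℝ) (ε : ℝ) (x v : ℝ → Vec N) (s : Set ℝ) : Prop :=
  ∀ t ∈ s, ‖v t‖ = 1 ∧ HasDerivAt x (-(reflect (v t) (gradient E (x t)))) t ∧
    HasDerivAt v ((ε ^ 2)⁻¹ • gadVField E (x t) (v t)) t

def IsIndexOneSaddle {N : ℕ} (E : Vec N → ℝ) (x : Vec N) : Prop :=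
  gradient E x = 0 ∧ ∃ lam1 lam2 : ℝ,
    TwoSmallestEigen (hessOp E x) lam1 lam2 ∧ lam1 < 0 ∧ 0 < lam2

end

noncomputable section

def mkVec (a b : ℝ) : Vec 2 := (WithLp.equiv 2 (Fin 2 → ℝ)).symm ![a, b]

/-- canonical basis vectors of `ℝ²`. -/
def e2 (i : Fin 2) : Vec 2 := EuclideanSpace.single i 1

/-- third partial derivatives `E_ijk = ∇³E(0)[e_i, e_j, e_k]`. -/
def D3 (E : Vec 2 → ℝ) (i j k : Fin 2) : ℝ :=
  iteratedFDeriv ℝ 3 E 0 ![e2 i, e2 j, e2 k]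

/-- the contracted matrix `∇³E(0)[x]`, as an endomorphism of `ℝ²`. -/
def T3L (E : Vec 2 → ℝ) (x : Vec 2) : Module.End ℝ (Vec 2) :=
  Matrix.toEuclideanLin (Matrix.of fun i j => ∑ k : Fin 2, D3 E i j k * x k)

/-- the matrix `A = [[(E111 - E122)/2, (E112 - E222)/2], [E112, E122]]`, as a map `ℝ² → ℝ²`. -/
def AL (E : Vec 2 → ℝ) : Vec 2 →ₗ[ℝ] Vec 2 :=
  Matrix.toEuclideanLin
    !![(D3 E 0 0 0 - D3 E 0 1 1) / 2, (D3 E 0 0 1 - D3 E 1 1 1) / 2;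
       D3 E 0 0 1, D3 E 0 1 1]

/-- rotation of angle `ω`, as a map `ℝ² → ℝ²`. -/
def RotL (ω : ℝ) : Vec 2 →ₗ[ℝ] Vec 2 :=
  Matrix.toEuclideanLin !![Real.cos ω, -Real.sin ω; Real.sin ω, Real.cos ω]

end

/- ############ auxiliary lemmas ############ -/

section Aux

lemma mkVec_zero (a b : ℝ) : (mkVec a b) 0 = a := rfl
lemma mkVec_one (a b : ℝ) : (mkVec a b) 1 = b := rfl

lemma vec2_ext {u v : Vec 2} (h0 : u 0 = v 0) (h1 : u 1 = v 1) : u = v := by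
  ext i; fin_cases i <;> assumption

lemma inner_vec2 (u v : Vec 2) : ⟪u, v⟫ = u 0 * v 0 + u 1 * v 1 := by
  simp [PiLp.inner_apply, Fin.sum_univ_two]; ring

lemma norm_sq_vec2 (u : Vec 2) : ‖u‖ ^ 2 = u 0 ^ 2 + u 1 ^ 2 := by
  rw [← real_inner_self_eq_norm_sq]
  simp only [PiLp.inner_apply, Fin.sum_univ_two, RCLike.inner_apply, conj_trivial]; ring

lemma toEuclideanLin_apply2 (M : Matrix (Fin 2) (Fin 2) ℝ) (u : Vec 2) (i : Fin 2) :
    (Matrix.toEuclideanLin M u) i = M i 0 * u 0 + M i 1 * u 1 := by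
  fin_cases i <;> simp [Matrix.toEuclideanLin_apply, Matrix.mulVec, dotProduct, Fin.sum_univ_two]

lemma smul_vec2 (k : ℝ) (u : Vec 2) (i : Fin 2) : (k • u) i = k * u i := rfl
lemma add_vec2 (u v : Vec 2) (i : Fin 2) : (u + v) i = u i + v i := rfl
lemma neg_vec2 (u : Vec 2) (i : Fin 2) : (-u) i = -(u i) := rfl

lemma smul_mkVec (k a b : ℝ) : k • mkVec a b = mkVec (k * a) (k * b) := by
  ext i; fin_cases i <;> rfl

lemma T3L_apply (E : Vec 2 → ℝ) (X u : Vec 2) (i : Fin 2) :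
    (T3L E X u) i = (D3 E i 0 0 * X 0 + D3 E i 0 1 * X 1) * u 0
      + (D3 E i 1 0 * X 0 + D3 E i 1 1 * X 1) * u 1 := by
  rw [T3L, toEuclideanLin_apply2]
  simp [Fin.sum_univ_two]

lemma AL_apply (E : Vec 2 → ℝ) (X : Vec 2) :
    (AL E X) 0 = (D3 E 0 0 0 - D3 E 0 1 1) / 2 * X 0 + (D3 E 0 0 1 - D3 E 1 1 1) / 2 * X 1
    ∧ (AL E X) 1 = D3 E 0 0 1 * X 0 + D3 E 0 1 1 * X 1 := by
  constructor <;> rw [AL, toEuclideanLin_apply2] <;>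
    simp [Matrix.cons_val_zero, Matrix.cons_val_one]

lemma RotL_apply (ω : ℝ) (u : Vec 2) :
    (RotL ω u) 0 = Real.cos ω * u 0 - Real.sin ω * u 1
    ∧ (RotL ω u) 1 = Real.sin ω * u 0 + Real.cos ω * u 1 := by
  constructor <;> rw [RotL, toEuclideanLin_apply2] <;>
    simp [Matrix.cons_val_zero, Matrix.cons_val_one] <;> ring

/-- swap the last two indices. -/
lemma D3_comm23 {E : Vec 2 → ℝ} (hE : ContDiff ℝ 3 E) (i j k : Fin 2) :
    D3 E i j k = D3 E i k j := by
  have hdiff : DifferentiableAt ℝ (iteratedFDeriv ℝ 2 E) 0 :=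
    (hE.differentiable_iteratedFDeriv (by norm_num)).differentiableAt
  have hsym : ∀ y : Vec 2, ∀ v w : Vec 2,
      iteratedFDeriv ℝ 2 E y ![v, w] = iteratedFDeriv ℝ 2 E y ![w, v] := by
    intro y v w
    rw [iteratedFDeriv_two_apply, iteratedFDeriv_two_apply]
    exact (hE.contDiffAt.isSymmSndFDerivAt (by norm_num)) v w
  have key : ∀ v w : Vec 2,
      (fderiv ℝ (iteratedFDeriv ℝ 2 E) 0 (e2 i)) ![v, w]
        = (fderiv ℝ (iteratedFDeriv ℝ 2 E) 0 (e2 i)) ![w, v] := by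
    intro v w
    have h1 : ∀ m : Fin 2 → Vec 2, fderiv ℝ (fun y => iteratedFDeriv ℝ 2 E y m) 0 (e2 i)
        = (fderiv ℝ (iteratedFDeriv ℝ 2 E) 0 (e2 i)) m := by
      intro m
      have := ((ContinuousMultilinearMap.apply ℝ (fun _ : Fin 2 => Vec 2) ℝ m).hasFDerivAt.comp
        (0 : Vec 2) hdiff.hasFDerivAt).fderiv
      rw [show ((ContinuousMultilinearMap.apply ℝ (fun _ : Fin 2 => Vec 2) ℝ m) ∘
        (iteratedFDeriv ℝ 2 E)) = (fun y => iteratedFDeriv ℝ 2 E y m) from rfl] at this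
      rw [this]; rfl
    have hfe : (fun y => iteratedFDeriv ℝ 2 E y ![v, w])
        = (fun y => iteratedFDeriv ℝ 2 E y ![w, v]) := funext (fun y => hsym y v w)
    rw [← h1 ![v, w], hfe, h1 ![w, v]]
  have e1 : D3 E i j k = (fderiv ℝ (iteratedFDeriv ℝ 2 E) 0 (e2 i)) ![e2 j, e2 k] := by
    rw [D3, iteratedFDeriv_succ_apply_left]
    congr 1
  have e2' : D3 E i k j = (fderiv ℝ (iteratedFDeriv ℝ 2 E) 0 (e2 i)) ![e2 k, e2 j] := by
    rw [D3, iteratedFDeriv_succ_apply_left]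
    congr 1
  rw [e1, e2', key]

/-- swap the first two indices. -/
lemma D3_comm12 {E : Vec 2 → ℝ} (hE : ContDiff ℝ 3 E) (i j k : Fin 2) :
    D3 E i j k = D3 E j i k := by
  have hg : ContDiff ℝ 2 (fderiv ℝ E) := (hE.fderiv_right (by norm_num))
  have hsym := (hg.contDiffAt (x := (0 : Vec 2))).isSymmSndFDerivAt (by simp [minSmoothness_of_isRCLikeNormedField])
  have expand : ∀ a b c : Fin 2, D3 E a b c
      = fderiv ℝ (fderiv ℝ (fderiv ℝ E)) 0 (e2 a) (e2 b) (e2 c) := by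
    intro a b c
    rw [D3, iteratedFDeriv_succ_apply_right, iteratedFDeriv_two_apply]
    rfl
  rw [expand, expand, hsym (e2 i) (e2 j)]

lemma hasDerivAt_mkVec {f g : ℝ → ℝ} {f' g' t : ℝ}
    (hf : HasDerivAt f f' t) (hg : HasDerivAt g g' t) :
    HasDerivAt (fun s => mkVec (f s) (g s)) (mkVec f' g') t := by
  have h := (hf.smul_const ((EuclideanSpace.single 0 1 : Vec 2))).add
    (hg.smul_const ((EuclideanSpace.single 1 1 : Vec 2)))
  have e1 : (fun s => mkVec (f s) (g s)) = (fun s => f s • (EuclideanSpace.single 0 1 : Vec 2)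
      + g s • (EuclideanSpace.single 1 1 : Vec 2)) := by
    funext s; ext i; fin_cases i <;> simp [mkVec, EuclideanSpace.single_apply]
  have e2 : mkVec f' g' = f' • (EuclideanSpace.single 0 1 : Vec 2)
      + g' • (EuclideanSpace.single 1 1 : Vec 2) := by
    ext i; fin_cases i <;> simp [mkVec, EuclideanSpace.single_apply]
  rw [e1, e2]; exact h

lemma hasDerivAt_comp_proj {V : ℝ → Vec 2} {D : Vec 2} {t : ℝ}
    (h : HasDerivAt V D t) (i : Fin 2) :
    HasDerivAt (fun s => V s i) (D i) t := by
  exact ((EuclideanSpace.proj i).hasFDerivAt.comp_hasDerivAt t h)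

/-- extracting the angular derivative from the derivative of `(cos φ, sin φ)`. -/
lemma hasDerivAt_angle {φ : ℝ → ℝ} {t k : ℝ} (hφ : ContinuousAt φ t)
    (h1 : HasDerivAt (fun s => cos (φ s)) (k * (-sin (φ t))) t)
    (h2 : HasDerivAt (fun s => sin (φ s)) (k * cos (φ t)) t) :
    HasDerivAt φ k t := by
  set c := φ t with hc
  have hf : HasDerivAt (fun s => sin (φ s) * cos c - cos (φ s) * sin c) k t := by
    have := (h2.mul_const (cos c)).sub (h1.mul_const (sin c))
    refine this.congr_deriv ?_
    have h := sin_sq_add_cos_sq c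
    linear_combination k * h
  have h0 : sin (φ t) * cos c - cos (φ t) * sin c = 0 := by rw [← hc]; ring
  have harcsin : HasDerivAt arcsin 1 (sin (φ t) * cos c - cos (φ t) * sin c) := by
    rw [h0]
    have := Real.hasDerivAt_arcsin (by norm_num : (0:ℝ) ≠ -1) (by norm_num : (0:ℝ) ≠ 1)
    simpa using this
  have hcomp : HasDerivAt (fun s => c + arcsin (sin (φ s) * cos c - cos (φ s) * sin c))
      (1 * k) t := by have := ((HasDerivAt.comp t harcsin hf).const_add c); exact this
  have hev : (fun s => c + arcsin (sin (φ s) * cos c - cos (φ s) * sin c)) =ᶠ[𝓝 t] φ := by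
    have hnear : ∀ᶠ s in 𝓝 t, φ s ∈ Ioo (c - π/2) (c + π/2) := by
      apply hφ.preimage_mem_nhds
      exact Ioo_mem_nhds (by linarith [pi_pos]) (by linarith [pi_pos])
    filter_upwards [hnear] with s hs
    have ha : -(π/2) ≤ φ s - c := by cases hs; linarith
    have hb : φ s - c ≤ π/2 := by cases hs; linarith
    have hss : sin (φ s) * cos c - cos (φ s) * sin c = sin (φ s - c) := by rw [sin_sub]
    rw [hss, arcsin_sin ha hb]; ring
  simpa using hcomp.congr_of_eventuallyEq hev.symm

lemma circle_hasDerivAt_iff {φ : ℝ → ℝ} {t : ℝ} (hφ : ContinuousAt φ t) (k : ℝ) :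
    HasDerivAt (fun s => mkVec (cos (φ s)) (sin (φ s)))
      (k • mkVec (-sin (φ t)) (cos (φ t))) t ↔ HasDerivAt φ k t := by
  constructor
  · intro h
    have h0 := hasDerivAt_comp_proj h 0
    have h1 := hasDerivAt_comp_proj h 1
    apply hasDerivAt_angle hφ
    · convert h0 using 1 <;> rfl
    · convert h1 using 1 <;> rfl
  · intro h
    have hc := (Real.hasDerivAt_cos (φ t)).comp t h
    have hs := (Real.hasDerivAt_sin (φ t)).comp t h
    have := hasDerivAt_mkVec hc hs
    convert this using 1
    · rfl
    rw [smul_mkVec]; congr 1 <;> ring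


lemma structure_lemma {E : Vec 2 → ℝ} (hE : ContDiff ℝ 3 E) (X : Vec 2) :
    ∃ a b c : ℝ, (∀ u : Vec 2, T3L E X u = mkVec (a * u 0 + b * u 1) (b * u 0 + c * u 1))
      ∧ AL E X = mkVec ((a - c) / 2) b := by
  have s1 : D3 E 0 1 0 = D3 E 0 0 1 := D3_comm23 hE 0 1 0
  have s2 : D3 E 1 0 0 = D3 E 0 0 1 := by rw [D3_comm12 hE]; exact s1
  have s3 : D3 E 1 0 1 = D3 E 0 1 1 := D3_comm12 hE 1 0 1
  have s4 : D3 E 1 1 0 = D3 E 0 1 1 := by rw [D3_comm23 hE]; exact s3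
  refine ⟨D3 E 0 0 0 * X 0 + D3 E 0 0 1 * X 1, D3 E 0 0 1 * X 0 + D3 E 0 1 1 * X 1,
    D3 E 0 1 1 * X 0 + D3 E 1 1 1 * X 1, ?_, ?_⟩
  · intro u
    apply vec2_ext
    · rw [T3L_apply, mkVec_zero, s1]
    · rw [T3L_apply, mkVec_one, s2, s3, s4]
  · apply vec2_ext
    · rw [(AL_apply E X).1, mkVec_zero]; ring
    · rw [(AL_apply E X).2, mkVec_one]

lemma eig_min_2x2 {T : Module.End ℝ (Vec 2)} {a b c r lam : ℝ} {w : Vec 2}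
    (hT : ∀ u : Vec 2, T u = mkVec (a * u 0 + b * u 1) (b * u 0 + c * u 1))
    (hr : 0 < r) (hr2 : r ^ 2 = ((a - c) / 2) ^ 2 + b ^ 2)
    (hwsq : w 0 ^ 2 + w 1 ^ 2 = 1)
    (hMw : T w = lam • w) (hmin : ∀ μ : ℝ, T.HasEigenvalue μ → lam ≤ μ) :
    2 * r * (w 0 * w 1) = -b ∧ r * (w 0 ^ 2 - w 1 ^ 2) = -((a - c) / 2) := by
  set p := (a - c) / 2 with hp
  set w0 := w 0 with hw0
  set w1 := w 1 with hw1
  rw [hT w] at hMw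
  have E0 : a * w0 + b * w1 = lam * w0 := congrArg (fun z : Vec 2 => z 0) hMw
  have E1 : b * w0 + c * w1 = lam * w1 := congrArg (fun z : Vec 2 => z 1) hMw
  have hev2 : T.HasEigenvalue ((a + c) / 2 - r) := by
    by_cases hb : b = 0 ∧ p = r
    · apply Module.End.hasEigenvalue_of_hasEigenvector (x := mkVec 0 1)
      refine ⟨Module.End.mem_eigenspace_iff.mpr ?_, ?_⟩
      · rw [hT]
        apply vec2_ext
        · show a * 0 + b * 1 = ((a + c) / 2 - r) * 0
          rw [hb.1]; ring
        · show b * 0 + c * 1 = ((a + c) / 2 - r) * 1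
          have := hb.2
          rw [hp] at this
          linarith
      · intro h0
        have := congrArg (fun z : Vec 2 => z 1) h0
        simp [mkVec_one] at this
    · apply Module.End.hasEigenvalue_of_hasEigenvector (x := mkVec (p - r) b)
      refine ⟨Module.End.mem_eigenspace_iff.mpr ?_, ?_⟩
      · rw [hT]
        apply vec2_ext
        · show a * (p - r) + b * b = ((a + c) / 2 - r) * (p - r)
          linear_combination (-1) * hr2 + r * hp
        · show b * (p - r) + c * b = ((a + c) / 2 - r) * b
          linear_combination b * hp
      · intro h0
        have h1 : p - r = 0 := congrArg (fun z : Vec 2 => z 0) h0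
        have h2 : b = 0 := congrArg (fun z : Vec 2 => z 1) h0
        exact hb ⟨h2, by linarith⟩
  have hle : lam ≤ (a + c) / 2 - r := hmin _ hev2
  have hne : w0 ^ 2 + w1 ^ 2 ≠ 0 := by rw [hwsq]; norm_num
  have hchar : (a - lam) * (c - lam) - b ^ 2 = 0 := by
    linear_combination (w0 * (c - lam) - w1 * b) * E0 + (w1 * (a - lam) - w0 * b) * E1
      - ((a - lam) * (c - lam) - b ^ 2) * hwsq
  have hsq : (lam - (a + c) / 2) ^ 2 = r ^ 2 := by
    linear_combination hchar - hr2 - (p + (a - c) / 2) * hp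
  have hlam : lam = (a + c) / 2 - r := by
    have hfac : (lam - ((a + c) / 2 - r)) * (lam - ((a + c) / 2 + r)) = 0 := by
      linear_combination hsq
    rcases mul_eq_zero.mp hfac with h | h
    · linarith
    · exfalso; linarith
  have F0 : (p + r) * w0 + b * w1 = 0 := by linear_combination E0 + w0 * hp + w0 * hlam
  have F1 : b * w0 + (r - p) * w1 = 0 := by linear_combination E1 - w1 * hp + w1 * hlam
  constructor
  · linear_combination w1 * F0 + w0 * F1 - b * hwsq
  · linear_combination w0 * F0 - w1 * F1 - p * hwsq - hp


end Aux

/-- Lemma `lemma_Ax`. -/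
theorem stmt13 (E : Vec 2 → ℝ) (hE : ContDiff ℝ 3 E) (α : ℝ)
    (hg0 : gradient E 0 = mkVec (Real.cos α) (Real.sin α)) (ε : ℝ) (hε : 0 < ε) :
    (∀ (x : ℝ → Vec 2) (φ : ℝ → ℝ), Continuous φ →
      ∀ (v vbar : ℝ → Vec 2),
        v = (fun t => mkVec (Real.cos (φ t)) (Real.sin (φ t))) →
        vbar = (fun t => mkVec (Real.cos (2 * φ t)) (Real.sin (2 * φ t))) →
        ∀ t : ℝ,
        ((HasDerivAt x (-(gradient E 0) + (2 * ⟪v t, gradient E 0⟫) • v t) t ∧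
          HasDerivAt v ((ε ^ 2)⁻¹ •
            (-(T3L E (x t) (v t)) + ⟪v t, T3L E (x t) (v t)⟫ • v t)) t)
        ↔
        (HasDerivAt x (RotL (-α) (vbar t)) t ∧
          HasDerivAt vbar ((ε ^ 2)⁻¹ •
            ((-2 * ⟪RotL (Real.pi / 2) (vbar t), AL E (x t)⟫) •
              RotL (Real.pi / 2) (vbar t))) t))) ∧
    (∀ x : Vec 2, AL E x ≠ 0 → ∀ w : Vec 2, IsMinEigvec (T3L E x) w →
      -(gradient E 0) + (2 * ⟪w, gradient E 0⟫) • w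
        = -(‖AL E x‖⁻¹ • RotL (-α) (AL E x))) := by
  constructor
  · -- Part (i)
    intro x φ hφ v vbar hv hvbar t
    have hct : ContinuousAt φ t := hφ.continuousAt
    subst hv hvbar
    beta_reduce
    obtain ⟨a, b, c, hT, hA⟩ := structure_lemma hE (x t)
    have hpy : Real.sin (φ t) ^ 2 + Real.cos (φ t) ^ 2 = 1 := Real.sin_sq_add_cos_sq (φ t)
    have claimA : -(gradient E 0)
          + (2 * ⟪mkVec (Real.cos (φ t)) (Real.sin (φ t)), gradient E 0⟫)
            • mkVec (Real.cos (φ t)) (Real.sin (φ t))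
        = RotL (-α) (mkVec (Real.cos (2 * φ t)) (Real.sin (2 * φ t))) := by
      rw [hg0]
      apply vec2_ext
      · show -(mkVec (Real.cos α) (Real.sin α) 0)
            + (2 * ⟪mkVec (Real.cos (φ t)) (Real.sin (φ t)), mkVec (Real.cos α) (Real.sin α)⟫)
              * Real.cos (φ t)
          = (RotL (-α) (mkVec (Real.cos (2 * φ t)) (Real.sin (2 * φ t)))) 0
        rw [(RotL_apply (-α) _).1, inner_vec2, Real.cos_neg, Real.sin_neg,
          Real.cos_two_mul, Real.sin_two_mul]
        simp only [mkVec_zero, mkVec_one]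
        ring
      · show -(mkVec (Real.cos α) (Real.sin α) 1)
            + (2 * ⟪mkVec (Real.cos (φ t)) (Real.sin (φ t)), mkVec (Real.cos α) (Real.sin α)⟫)
              * Real.sin (φ t)
          = (RotL (-α) (mkVec (Real.cos (2 * φ t)) (Real.sin (2 * φ t)))) 1
        rw [(RotL_apply (-α) _).2, inner_vec2, Real.cos_neg, Real.sin_neg,
          Real.cos_two_mul, Real.sin_two_mul]
        simp only [mkVec_zero, mkVec_one]
        linear_combination 2 * Real.sin α * hpy
    have claimB : (ε ^ 2)⁻¹ • (-(T3L E (x t) (mkVec (Real.cos (φ t)) (Real.sin (φ t))))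
          + ⟪mkVec (Real.cos (φ t)) (Real.sin (φ t)),
              T3L E (x t) (mkVec (Real.cos (φ t)) (Real.sin (φ t)))⟫
            • mkVec (Real.cos (φ t)) (Real.sin (φ t)))
        = ((ε ^ 2)⁻¹ * ((a - c) / 2 * Real.sin (2 * φ t) - b * Real.cos (2 * φ t)))
            • mkVec (-Real.sin (φ t)) (Real.cos (φ t)) := by
      rw [hT, inner_vec2]
      apply vec2_ext
      · simp only [smul_vec2, add_vec2, neg_vec2, mkVec_zero, mkVec_one]
        rw [Real.cos_two_mul, Real.sin_two_mul]
        linear_combination ((ε ^ 2)⁻¹ * a * Real.cos (φ t)) * hpy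
      · simp only [smul_vec2, add_vec2, neg_vec2, mkVec_zero, mkVec_one]
        rw [Real.cos_two_mul, Real.sin_two_mul]
        linear_combination ((ε ^ 2)⁻¹ * (2 * b * Real.cos (φ t) + c * Real.sin (φ t))) * hpy
    have hR : RotL (Real.pi / 2) (mkVec (Real.cos (2 * φ t)) (Real.sin (2 * φ t)))
        = mkVec (-Real.sin (2 * φ t)) (Real.cos (2 * φ t)) := by
      apply vec2_ext
      · rw [(RotL_apply _ _).1, Real.cos_pi_div_two, Real.sin_pi_div_two]
        simp only [mkVec_zero, mkVec_one]
        ring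
      · rw [(RotL_apply _ _).2, Real.cos_pi_div_two, Real.sin_pi_div_two]
        simp only [mkVec_zero, mkVec_one]
        ring
    have claimC : (ε ^ 2)⁻¹ •
          ((-2 * ⟪RotL (Real.pi / 2) (mkVec (Real.cos (2 * φ t)) (Real.sin (2 * φ t))),
              AL E (x t)⟫)
            • RotL (Real.pi / 2) (mkVec (Real.cos (2 * φ t)) (Real.sin (2 * φ t))))
        = (2 * ((ε ^ 2)⁻¹ * ((a - c) / 2 * Real.sin (2 * φ t) - b * Real.cos (2 * φ t))))
            • mkVec (-Real.sin (2 * φ t)) (Real.cos (2 * φ t)) := by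
      rw [hR, hA, inner_vec2]
      simp only [mkVec_zero, mkVec_one]
      rw [smul_smul]
      congr 1
      ring
    rw [claimA, claimB, claimC]
    refine and_congr Iff.rfl ?_
    have htwo : HasDerivAt (fun s => 2 * φ s)
        (2 * ((ε ^ 2)⁻¹ * ((a - c) / 2 * Real.sin (2 * φ t) - b * Real.cos (2 * φ t)))) t
        ↔ HasDerivAt φ
          ((ε ^ 2)⁻¹ * ((a - c) / 2 * Real.sin (2 * φ t) - b * Real.cos (2 * φ t))) t := by
      constructor
      · intro h
        have h2 := h.const_mul ((2:ℝ)⁻¹)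
        have he : (fun s => (2:ℝ)⁻¹ * (2 * φ s)) = φ := by funext s; ring
        rw [he] at h2
        refine h2.congr_deriv ?_
        ring
      · intro h
        exact h.const_mul 2
    exact (circle_hasDerivAt_iff hct _).trans (htwo.symm.trans
      (circle_hasDerivAt_iff (φ := fun s => 2 * φ s)
        ((continuous_const.mul hφ).continuousAt) _).symm)
  · -- Part (ii)
    intro x hAx w hw
    obtain ⟨hwn, lam, ⟨hev, hmin⟩, hMw⟩ := hw
    obtain ⟨a, b, c, hT, hA⟩ := structure_lemma hE x
    have hrpos : 0 < ‖AL E x‖ := norm_pos_iff.mpr hAx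
    set r := ‖AL E x‖ with hrdef
    have hrne : r ≠ 0 := ne_of_gt hrpos
    have hr2 : r ^ 2 = ((a - c) / 2) ^ 2 + b ^ 2 := by
      rw [hrdef, norm_sq_vec2, hA, mkVec_zero, mkVec_one]
    have hwsq : w 0 ^ 2 + w 1 ^ 2 = 1 := by
      have h := norm_sq_vec2 w
      rw [hwn] at h
      simpa using h.symm
    obtain ⟨G1, G2⟩ := eig_min_2x2 hT hrpos hr2 hwsq hMw hmin
    rw [hg0]
    apply vec2_ext
    · show -(mkVec (Real.cos α) (Real.sin α) 0)
          + (2 * ⟪w, mkVec (Real.cos α) (Real.sin α)⟫) * w 0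
        = -(r⁻¹ * (RotL (-α) (AL E x)) 0)
      rw [hA, (RotL_apply (-α) _).1, inner_vec2, Real.cos_neg, Real.sin_neg]
      simp only [mkVec_zero, mkVec_one]
      field_simp
      linear_combination 2 * Real.cos α * G2 + 2 * Real.sin α * G1 + 2 * r * Real.cos α * hwsq
    · show -(mkVec (Real.cos α) (Real.sin α) 1)
          + (2 * ⟪w, mkVec (Real.cos α) (Real.sin α)⟫) * w 1
        = -(r⁻¹ * (RotL (-α) (AL E x)) 1)
      rw [hA, (RotL_apply (-α) _).2, inner_vec2, Real.cos_neg, Real.sin_neg]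
      simp only [mkVec_zero, mkVec_one]
      field_simp
      linear_combination 2 * Real.cos α * G1 - 2 * Real.sin α * G2 + 2 * r * Real.sin α * hwsq
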